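/- Let Y₁, Y₂, A₁, A₂, M₁, M₂ be discrete random variables with M₁, M₂ taking values in {0,1}. Suppose (i) Y₂ ⫫ (M₁, M₂) | (A₁, A₂, Y₁) and (ii) Y₁ ⫫ M₁ | A₁. Then the quantity θ(y₂, a₁, a₂) := Σ_{y₁} P(Y₂ = y₂ | A₁ = a₁, A₂ = a₂, Y₁ = y₁) · P(Y₁ = y₁ | A₁ = a₁) equals Σ_{y₁} P(Y₂ = y₂ | A₁ = a₁, A₂ = a₂, Y₁ = y₁, M₁ = 0, M₂ = 0) · P(Y₁ = y₁ | A₁ = a₁, M₁ = 0), whenever all conditioning events have positive probability. -/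
import Mathlib


open MeasureTheory

/-- Conditional probability `P(A | B) = P(A ∩ B) / P(B)`. -/
noncomputable def pcond {Ω : Type*} [MeasurableSpace Ω] (μ : Measure Ω)
    (A B : Set Ω) : ENNReal := μ (A ∩ B) / μ B

lemma aux_div {a c b d : ENNReal} (hb0 : b ≠ 0) (hb : b ≠ ⊤) (hd0 : d ≠ 0) (hd : d ≠ ⊤)
    (h : a / b = (c / b) * (d / b)) : a / d = c / b := by
  have ha : a = c * d / b := by
    have h2 := congrArg (· * b) h
    simp only [ENNReal.div_mul_cancel hb0 hb] at h2
    rw [h2, mul_assoc, ENNReal.div_mul_cancel hb0 hb]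
    simp [div_eq_mul_inv, mul_comm, mul_assoc, mul_left_comm]
  rw [ha]
  rw [mul_comm, mul_div_assoc, mul_comm, mul_div_assoc, ENNReal.div_self hd0 hd, mul_one]

theorem sequential_factorization_recoverability
    {Ω 𝒴₁ 𝒴₂ 𝒜₁ 𝒜₂ : Type*} [MeasurableSpace Ω] [Fintype 𝒴₁] [Fintype 𝒴₂]
    [Fintype 𝒜₁] [Fintype 𝒜₂]
    (μ : Measure Ω) [IsProbabilityMeasure μ]
    (Y₁ : Ω → 𝒴₁) (Y₂ : Ω → 𝒴₂) (A₁ : Ω → 𝒜₁) (A₂ : Ω → 𝒜₂) (M₁ M₂ : Ω → Fin 2)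
    -- (i) Y₂ ⫫ (M₁, M₂) | (A₁, A₂, Y₁)
    (hci₁ : ∀ (y₂ : 𝒴₂) (m₁ m₂ : Fin 2) (a₁ : 𝒜₁) (a₂ : 𝒜₂) (y₁ : 𝒴₁),
      0 < μ ({ω | A₁ ω = a₁} ∩ {ω | A₂ ω = a₂} ∩ {ω | Y₁ ω = y₁}) →
      pcond μ ({ω | Y₂ ω = y₂} ∩ {ω | M₁ ω = m₁} ∩ {ω | M₂ ω = m₂})
          ({ω | A₁ ω = a₁} ∩ {ω | A₂ ω = a₂} ∩ {ω | Y₁ ω = y₁})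
        = pcond μ {ω | Y₂ ω = y₂} ({ω | A₁ ω = a₁} ∩ {ω | A₂ ω = a₂} ∩ {ω | Y₁ ω = y₁})
          * pcond μ ({ω | M₁ ω = m₁} ∩ {ω | M₂ ω = m₂})
              ({ω | A₁ ω = a₁} ∩ {ω | A₂ ω = a₂} ∩ {ω | Y₁ ω = y₁}))
    -- (ii) Y₁ ⫫ M₁ | A₁
    (hci₂ : ∀ (y₁ : 𝒴₁) (m₁ : Fin 2) (a₁ : 𝒜₁), 0 < μ {ω | A₁ ω = a₁} →
      pcond μ ({ω | Y₁ ω = y₁} ∩ {ω | M₁ ω = m₁}) {ω | A₁ ω = a₁}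
        = pcond μ {ω | Y₁ ω = y₁} {ω | A₁ ω = a₁}
          * pcond μ {ω | M₁ ω = m₁} {ω | A₁ ω = a₁})
    (y₂ : 𝒴₂) (a₁ : 𝒜₁) (a₂ : 𝒜₂)
    -- positivity of all conditioning events
    (hpos₁ : ∀ y₁ : 𝒴₁,
      0 < μ ({ω | A₁ ω = a₁} ∩ {ω | A₂ ω = a₂} ∩ {ω | Y₁ ω = y₁}
        ∩ {ω | M₁ ω = 0} ∩ {ω | M₂ ω = 0}))
    (hpos₂ : 0 < μ ({ω | A₁ ω = a₁} ∩ {ω | M₁ ω = 0})) :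
    ∑ y₁ : 𝒴₁,
        pcond μ {ω | Y₂ ω = y₂} ({ω | A₁ ω = a₁} ∩ {ω | A₂ ω = a₂} ∩ {ω | Y₁ ω = y₁})
          * pcond μ {ω | Y₁ ω = y₁} {ω | A₁ ω = a₁}
      = ∑ y₁ : 𝒴₁,
        pcond μ {ω | Y₂ ω = y₂}
            ({ω | A₁ ω = a₁} ∩ {ω | A₂ ω = a₂} ∩ {ω | Y₁ ω = y₁}
              ∩ {ω | M₁ ω = 0} ∩ {ω | M₂ ω = 0})
          * pcond μ {ω | Y₁ ω = y₁} ({ω | A₁ ω = a₁} ∩ {ω | M₁ ω = 0}) := by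
  refine Finset.sum_congr rfl fun y₁ _ => ?_
  set B := {ω | A₁ ω = a₁} ∩ {ω | A₂ ω = a₂} ∩ {ω | Y₁ ω = y₁} with hB
  have hdpos : 0 < μ (B ∩ {ω | M₁ ω = 0} ∩ {ω | M₂ ω = 0}) := hpos₁ y₁
  have hbpos : 0 < μ B := lt_of_lt_of_le hdpos
    (le_trans (measure_mono Set.inter_subset_left) (measure_mono Set.inter_subset_left))
  have e1 : pcond μ {ω | Y₂ ω = y₂} (B ∩ {ω | M₁ ω = 0} ∩ {ω | M₂ ω = 0})
      = pcond μ {ω | Y₂ ω = y₂} B := by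
    have h := hci₁ y₂ 0 0 a₁ a₂ y₁ hbpos
    rw [← hB] at h
    have s1 : {ω | Y₂ ω = y₂} ∩ {ω | M₁ ω = 0} ∩ {ω | M₂ ω = 0} ∩ B
        = {ω | Y₂ ω = y₂} ∩ (B ∩ {ω | M₁ ω = 0} ∩ {ω | M₂ ω = 0}) := by
      ext ω; simp only [Set.mem_inter_iff]; tauto
    have s2 : {ω | M₁ ω = 0} ∩ {ω | M₂ ω = 0} ∩ B
        = B ∩ {ω | M₁ ω = 0} ∩ {ω | M₂ ω = 0} := by
      ext ω; simp only [Set.mem_inter_iff]; tauto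
    unfold pcond at h ⊢
    rw [s1, s2] at h
    exact aux_div hbpos.ne' (measure_ne_top μ B) hdpos.ne' (measure_ne_top μ _) h
  have hA₁pos : 0 < μ {ω | A₁ ω = a₁} :=
    lt_of_lt_of_le hpos₂ (measure_mono Set.inter_subset_left)
  have e2 : pcond μ {ω | Y₁ ω = y₁} ({ω | A₁ ω = a₁} ∩ {ω | M₁ ω = 0})
      = pcond μ {ω | Y₁ ω = y₁} {ω | A₁ ω = a₁} := by
    have h := hci₂ y₁ 0 a₁ hA₁pos
    have s1 : {ω | Y₁ ω = y₁} ∩ {ω | M₁ ω = 0} ∩ {ω | A₁ ω = a₁}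
        = {ω | Y₁ ω = y₁} ∩ ({ω | A₁ ω = a₁} ∩ {ω | M₁ ω = 0}) := by
      ext ω; simp only [Set.mem_inter_iff]; tauto
    have s2 : {ω | M₁ ω = 0} ∩ {ω | A₁ ω = a₁} = {ω | A₁ ω = a₁} ∩ {ω | M₁ ω = 0} :=
      Set.inter_comm _ _
    unfold pcond at h ⊢
    rw [s1, s2] at h
    exact aux_div hA₁pos.ne' (measure_ne_top μ _) hpos₂.ne' (measure_ne_top μ _) h
  rw [e1, e2]
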